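/- For every word w = e_{a₁}⋯e_{a_N} with a₁,…,a_N ∈ {0,1}, the following identity holds in H[[s,t]]: ∑_{v=0}^{N} (−1)^v ((1+e₀t)^{−1}·e₁·e_{a₁}⋯e_{a_v}) ⧢ ((1−e₀s)^{−1}·e₁·e_{a_N}⋯e_{a_{v+1}}) = (1+e₀t)^{−1} ⧢ ((1−e₀s)^{−1}·e₁·(e_{a_N}⋯e_{a₁})·e₁·(1−e₀t)^{−1}) + (−1)^N (1−e₀s)^{−1} ⧢ ((1+e₀t)^{−1}·e₁·(e_{a₁}⋯e_{a_N})·e₁·(1+e₀s)^{−1}). -/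

import Mathlib

/- STATEMENT 6: the telescoping shuffle identity in H[[s,t]] (Lemma on shuffle, used for
the (s,t)-adic duality): for every word w = e_{a₁}⋯e_{a_N},
∑_{v=0}^{N} (-1)^v ((1+e₀t)⁻¹ e₁ e_{a₁}⋯e_{a_v}) ⧢ ((1-e₀s)⁻¹ e₁ e_{a_N}⋯e_{a_{v+1}})
 = (1+e₀t)⁻¹ ⧢ ((1-e₀s)⁻¹ e₁ ←w e₁ (1-e₀t)⁻¹)
 + (-1)^N (1-e₀s)⁻¹ ⧢ ((1+e₀t)⁻¹ e₁ w e₁ (1+e₀s)⁻¹).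
We realize H[[s,t]] as H[[t]][[s]] (inner variable t, outer variable s). -/

noncomputable section

abbrev H : Type := FreeAlgebra ℚ (Fin 2)

def e0 : H := FreeAlgebra.ι ℚ 0
def e1 : H := FreeAlgebra.ι ℚ 1

/-- The word `e_{a₁}⋯e_{a_N}` of a list of letters. -/
def word (l : List (Fin 2)) : H := (l.map (FreeAlgebra.ι ℚ)).prod

/-- `H[[t]]`. -/
abbrev HT : Type := PowerSeries H
/-- `H[[s,t]] = H[[t]][[s]]`. -/
abbrev HST : Type := PowerSeries HT

/-- Embedding of `H` into `H[[s,t]]`. -/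
def embB (x : H) : HST := PowerSeries.C (PowerSeries.C x)

/-- Coefficientwise (Cauchy) extension of a bilinear product on `H` to `H[[t]]`. -/
def extT (sh : H →ₗ[ℚ] H →ₗ[ℚ] H) (f g : HT) : HT :=
  PowerSeries.mk fun n => ∑ p ∈ Finset.HasAntidiagonal.antidiagonal n,
    sh (PowerSeries.coeff p.1 f) (PowerSeries.coeff p.2 g)

/-- Coefficientwise (Cauchy) extension of a bilinear product on `H` to `H[[s,t]]`. -/
def extST (sh : H →ₗ[ℚ] H →ₗ[ℚ] H) (f g : HST) : HST :=
  PowerSeries.mk fun n => ∑ p ∈ Finset.HasAntidiagonal.antidiagonal n,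
    extT sh (PowerSeries.coeff p.1 f) (PowerSeries.coeff p.2 g)

/-- `(1 + e₀ t)⁻¹ = ∑_n (-1)ⁿ e₀ⁿ tⁿ` in `H[[s,t]]`. -/
def invOnePlusE0T : HST := PowerSeries.C (PowerSeries.mk fun n => (-1 : H) ^ n * e0 ^ n)
/-- `(1 - e₀ t)⁻¹ = ∑_n e₀ⁿ tⁿ` in `H[[s,t]]`. -/
def invOneMinusE0T : HST := PowerSeries.C (PowerSeries.mk fun n => e0 ^ n)
/-- `(1 - e₀ s)⁻¹ = ∑_n e₀ⁿ sⁿ` in `H[[s,t]]`. -/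
def invOneMinusE0S : HST := PowerSeries.mk fun n => PowerSeries.C (e0 ^ n)
/-- `(1 + e₀ s)⁻¹ = ∑_n (-1)ⁿ e₀ⁿ sⁿ` in `H[[s,t]]`. -/
def invOnePlusE0S : HST := PowerSeries.mk fun n => PowerSeries.C ((-1 : H) ^ n * e0 ^ n)

@[simp] lemma word_nil : word [] = 1 := rfl

lemma word_cons (i : Fin 2) (l : List (Fin 2)) :
    word (i :: l) = FreeAlgebra.ι ℚ i * word l := by simp [word]

lemma word_concat (l : List (Fin 2)) (i : Fin 2) :
    word (l ++ [i]) = word l * FreeAlgebra.ι ℚ i := by simp [word]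

lemma mem_span_words (u : H) : u ∈ Submodule.span ℚ (Set.range word) := by
  induction u using FreeAlgebra.induction with
  | grade0 r =>
      have : (algebraMap ℚ H r) = r • (1 : H) := by simp [Algebra.smul_def]
      rw [this]
      exact Submodule.smul_mem _ _ (Submodule.subset_span ⟨[], rfl⟩)
  | grade1 x => exact Submodule.subset_span ⟨[x], by simp [word]⟩
  | add a b ha hb => exact Submodule.add_mem _ ha hb
  | mul a b ha hb =>
      -- show span is closed under multiplication
      refine Submodule.span_induction (p := fun a _ => a * b ∈ Submodule.span ℚ (Set.range word))
        ?_ ?_ ?_ ?_ ha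
      · rintro x ⟨l, rfl⟩
        refine Submodule.span_induction
          (p := fun b _ => word l * b ∈ Submodule.span ℚ (Set.range word)) ?_ ?_ ?_ ?_ hb
        · rintro y ⟨l', rfl⟩
          have : word l * word l' = word (l ++ l') := by simp [word]
          rw [this]; exact Submodule.subset_span ⟨_, rfl⟩
        · simp
        · intro x y _ _ hx hy; rw [mul_add]; exact Submodule.add_mem _ hx hy
        · intro a x _ hx; rw [mul_smul_comm]; exact Submodule.smul_mem _ _ hx
      · simp
      · intro x y _ _ hx hy; rw [add_mul]; exact Submodule.add_mem _ hx hy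
      · intro a x _ hx; rw [smul_mul_assoc]; exact Submodule.smul_mem _ _ hx

section sh
variable (sh : H →ₗ[ℚ] H →ₗ[ℚ] H)

lemma sh_one_left (hOneL : ∀ l : List (Fin 2), sh (word []) (word l) = word l) (u : H) :
    sh 1 u = u := by
  refine Submodule.span_induction (p := fun u _ => sh 1 u = u) ?_ (by simp) ?_ ?_
    (mem_span_words u)
  · rintro x ⟨l, rfl⟩; simpa using hOneL l
  · intro x y _ _ hx hy; rw [map_add, hx, hy]
  · intro a x _ hx; rw [map_smul, hx]

lemma sh_one_right (hOneR : ∀ l : List (Fin 2), sh (word l) (word []) = word l) (u : H) :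
    sh u 1 = u := by
  refine Submodule.span_induction (p := fun u _ => sh u 1 = u) ?_ (by simp) ?_ ?_
    (mem_span_words u)
  · rintro x ⟨l, rfl⟩; simpa using hOneR l
  · intro x y _ _ hx hy; rw [map_add, LinearMap.add_apply, hx, hy]
  · intro a x _ hx; rw [map_smul, LinearMap.smul_apply, hx]

lemma sh_rec
    (hRec : ∀ (l l' : List (Fin 2)) (i j : Fin 2),
      sh (word (l ++ [i])) (word (l' ++ [j])) =
        sh (word (l ++ [i])) (word l') * FreeAlgebra.ι ℚ j
        + sh (word l) (word (l' ++ [j])) * FreeAlgebra.ι ℚ i)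
    (u u' : H) (i j : Fin 2) :
    sh (u * FreeAlgebra.ι ℚ i) (u' * FreeAlgebra.ι ℚ j) =
      sh (u * FreeAlgebra.ι ℚ i) u' * FreeAlgebra.ι ℚ j
      + sh u (u' * FreeAlgebra.ι ℚ j) * FreeAlgebra.ι ℚ i := by
  refine Submodule.span_induction (p := fun u _ => ∀ u' : H,
      sh (u * FreeAlgebra.ι ℚ i) (u' * FreeAlgebra.ι ℚ j) =
      sh (u * FreeAlgebra.ι ℚ i) u' * FreeAlgebra.ι ℚ j
      + sh u (u' * FreeAlgebra.ι ℚ j) * FreeAlgebra.ι ℚ i) ?_ ?_ ?_ ?_ (mem_span_words u) u'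
  · rintro x ⟨l, rfl⟩ u'
    refine Submodule.span_induction (p := fun u' _ =>
      sh (word l * FreeAlgebra.ι ℚ i) (u' * FreeAlgebra.ι ℚ j) =
      sh (word l * FreeAlgebra.ι ℚ i) u' * FreeAlgebra.ι ℚ j
      + sh (word l) (u' * FreeAlgebra.ι ℚ j) * FreeAlgebra.ι ℚ i) ?_ ?_ ?_ ?_ (mem_span_words u')
    · rintro y ⟨l', rfl⟩
      rw [← word_concat, ← word_concat]; exact hRec l l' i j
    · simp
    · intro x y _ _ hx hy
      simp only [add_mul, map_add, LinearMap.add_apply, hx, hy]; abel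
    · intro a x _ hx
      simp only [smul_mul_assoc, map_smul, LinearMap.smul_apply, hx, smul_add]
  · intro u'; simp
  · intro x y _ _ hx hy u'
    simp only [add_mul, map_add, LinearMap.add_apply, hx, hy]; abel
  · intro a x _ hx u'
    simp only [smul_mul_assoc, map_smul, LinearMap.smul_apply, hx, smul_add]

lemma sh_symm
    (hOneL : ∀ l : List (Fin 2), sh (word []) (word l) = word l)
    (hOneR : ∀ l : List (Fin 2), sh (word l) (word []) = word l)
    (hRec : ∀ (l l' : List (Fin 2)) (i j : Fin 2),
      sh (word (l ++ [i])) (word (l' ++ [j])) =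
        sh (word (l ++ [i])) (word l') * FreeAlgebra.ι ℚ j
        + sh (word l) (word (l' ++ [j])) * FreeAlgebra.ι ℚ i)
    (u u' : H) : sh u u' = sh u' u := by
  have key : ∀ n (l l' : List (Fin 2)), l.length + l'.length ≤ n →
      sh (word l) (word l') = sh (word l') (word l) := by
    intro n
    induction n with
    | zero =>
        intro l l' h
        have hl : l = [] := List.eq_nil_of_length_eq_zero (by omega)
        have hl' : l' = [] := List.eq_nil_of_length_eq_zero (by omega)
        subst hl; subst hl'; rfl
    | succ n ih =>
        intro l l' h
        rcases List.eq_nil_or_concat l with rfl | ⟨a, i, rfl⟩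
        · rw [hOneL, hOneR]
        rcases List.eq_nil_or_concat l' with rfl | ⟨b, j, rfl⟩
        · rw [hOneL, hOneR]
        simp only [List.concat_eq_append] at *
        rw [hRec a b i j, hRec b a j i]
        have h1 : a.length + (b ++ [j]).length ≤ n := by simp at h ⊢; omega
        have h2 : (a ++ [i]).length + b.length ≤ n := by simp at h ⊢; omega
        rw [ih _ _ h1, ih _ _ h2, add_comm]
  refine Submodule.span_induction (p := fun u _ => ∀ u', sh u u' = sh u' u)
    ?_ ?_ ?_ ?_ (mem_span_words u) u'
  · rintro x ⟨l, rfl⟩ u'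
    refine Submodule.span_induction (p := fun u' _ => sh (word l) u' = sh u' (word l))
      ?_ (by simp) ?_ ?_ (mem_span_words u')
    · rintro y ⟨l', rfl⟩; exact key _ l l' le_rfl
    · intro x y _ _ hx hy; simp only [map_add, LinearMap.add_apply, hx, hy]
    · intro a x _ hx; simp only [map_smul, LinearMap.smul_apply, hx]
  · intro u'; simp
  · intro x y _ _ hx hy u'; simp only [map_add, LinearMap.add_apply, hx, hy]
  · intro a x _ hx u'; simp only [map_smul, LinearMap.smul_apply, hx]

end sh

section series
variable (sh : H →ₗ[ℚ] H →ₗ[ℚ] H)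

@[simp] lemma embB_one : embB 1 = 1 := by simp [embB]
lemma embB_mul (x y : H) : embB (x * y) = embB x * embB y := by simp [embB]

lemma coeff_extT (n : ℕ) (f g : HT) : PowerSeries.coeff n (extT sh f g) =
    ∑ p ∈ Finset.HasAntidiagonal.antidiagonal n, sh (PowerSeries.coeff p.1 f) (PowerSeries.coeff p.2 g) := by
  simp [extT]

lemma coeff_extST (n : ℕ) (F G : HST) : PowerSeries.coeff n (extST sh F G) =
    ∑ p ∈ Finset.HasAntidiagonal.antidiagonal n,
      extT sh (PowerSeries.coeff p.1 F) (PowerSeries.coeff p.2 G) := by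
  simp [extST]

@[simp] lemma extT_zero_left (g : HT) : extT sh 0 g = 0 := by
  ext n; simp [extT]

@[simp] lemma extT_zero_right (f : HT) : extT sh f 0 = 0 := by
  ext n; simp [extT]

lemma extT_add_left (f f' g : HT) : extT sh (f + f') g = extT sh f g + extT sh f' g := by
  ext n; simp [extT, Finset.sum_add_distrib]

lemma extT_add_right (f g g' : HT) : extT sh f (g + g') = extT sh f g + extT sh f g' := by
  ext n; simp [extT, Finset.sum_add_distrib]

lemma extT_sub_left (f f' g : HT) : extT sh (f - f') g = extT sh f g - extT sh f' g := by
  ext n; simp [extT, Finset.sum_sub_distrib, map_sub]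

lemma extST_add_left (f f' g : HST) : extST sh (f + f') g = extST sh f g + extST sh f' g := by
  ext n; simp [extST, extT_add_left, Finset.sum_add_distrib]

lemma extST_add_right (f g g' : HST) : extST sh f (g + g') = extST sh f g + extST sh f g' := by
  ext n; simp [extST, extT_add_right, Finset.sum_add_distrib]

lemma extST_sub_right (f g g' : HST) : extST sh f (g - g') = extST sh f g - extST sh f g' := by
  refine PowerSeries.ext fun n => ?_
  have extT_sub_right : ∀ a b b' : HT, extT sh a (b - b') = extT sh a b - extT sh a b' := by
    intro a b b'; ext m; simp [extT, Finset.sum_sub_distrib, map_sub]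
  simp only [coeff_extST, map_sub, extT_sub_right, Finset.sum_sub_distrib]

lemma extST_sub_left (f f' g : HST) : extST sh (f - f') g = extST sh f g - extST sh f' g := by
  refine PowerSeries.ext fun n => ?_
  simp only [coeff_extST, map_sub, extT_sub_left, Finset.sum_sub_distrib]

variable (shOneL : ∀ u : H, sh 1 u = u) (shOneR : ∀ u : H, sh u 1 = u)
  (shSymm : ∀ u u' : H, sh u u' = sh u' u)
  (shRec : ∀ (u u' : H) (i j : Fin 2),
    sh (u * FreeAlgebra.ι ℚ i) (u' * FreeAlgebra.ι ℚ j) =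
      sh (u * FreeAlgebra.ι ℚ i) u' * FreeAlgebra.ι ℚ j
      + sh u (u' * FreeAlgebra.ι ℚ j) * FreeAlgebra.ι ℚ i)

include shOneL in
lemma extT_one_left (g : HT) : extT sh 1 g = g := by
  ext n
  rw [coeff_extT]
  rw [Finset.sum_eq_single (0, n)]
  · simpa using shOneL _
  · rintro ⟨a, b⟩ hab hne
    have : a ≠ 0 := by
      rintro rfl
      simp only [Finset.HasAntidiagonal.mem_antidiagonal, zero_add] at hab
      subst hab
      exact hne rfl
    simp [PowerSeries.coeff_one, this]
  · intro h; exact absurd (by simp) h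

include shOneR in
lemma extT_one_right (f : HT) : extT sh f 1 = f := by
  ext n
  rw [coeff_extT]
  rw [Finset.sum_eq_single (n, 0)]
  · simpa using shOneR _
  · rintro ⟨a, b⟩ hab hne
    have : b ≠ 0 := by
      rintro rfl
      simp only [Finset.HasAntidiagonal.mem_antidiagonal, add_zero] at hab
      subst hab
      exact hne rfl
    simp [PowerSeries.coeff_one, this]
  · intro h; exact absurd (by simp) h

include shSymm in
lemma extT_comm (f g : HT) : extT sh f g = extT sh g f := by
  ext n
  rw [coeff_extT, coeff_extT, ← Finset.Nat.sum_antidiagonal_swap]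
  apply Finset.sum_congr rfl; intro p _
  exact shSymm _ _

include shSymm in
lemma extST_comm (F G : HST) : extST sh F G = extST sh G F := by
  refine PowerSeries.ext fun n => ?_
  rw [coeff_extST, coeff_extST, ← Finset.Nat.sum_antidiagonal_swap]
  apply Finset.sum_congr rfl; intro p _
  exact extT_comm sh shSymm _ _

include shOneL in
lemma extST_one_left (G : HST) : extST sh 1 G = G := by
  refine PowerSeries.ext fun n => ?_
  rw [coeff_extST]
  rw [Finset.sum_eq_single (0, n)]
  · simp [extT_one_left sh shOneL]
  · rintro ⟨a, b⟩ hab hne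
    have : a ≠ 0 := by
      rintro rfl
      simp only [Finset.HasAntidiagonal.mem_antidiagonal, zero_add] at hab
      subst hab
      exact hne rfl
    simp [PowerSeries.coeff_one, this]
  · intro h; exact absurd (by simp) h

lemma extT_mul_X_right (f g : HT) : extT sh f (g * PowerSeries.X) = extT sh f g * PowerSeries.X := by
  ext n
  cases n with
  | zero =>
      rw [coeff_extT, PowerSeries.coeff_zero_mul_X]
      simp [Finset.Nat.antidiagonal_zero, PowerSeries.coeff_zero_mul_X]
  | succ n =>
      rw [coeff_extT, PowerSeries.coeff_succ_mul_X, coeff_extT,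
        Finset.Nat.sum_antidiagonal_succ']
      simp only [PowerSeries.coeff_zero_mul_X, map_zero, zero_add]
      apply Finset.sum_congr rfl; intro p _
      rw [PowerSeries.coeff_succ_mul_X]

lemma extST_mul_X_right (F G : HST) :
    extST sh F (G * PowerSeries.X) = extST sh F G * PowerSeries.X := by
  refine PowerSeries.ext fun n => ?_
  cases n with
  | zero =>
      rw [coeff_extST, PowerSeries.coeff_zero_mul_X]
      simp [Finset.Nat.antidiagonal_zero, PowerSeries.coeff_zero_mul_X]
  | succ n =>
      rw [coeff_extST, PowerSeries.coeff_succ_mul_X, coeff_extST,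
        Finset.Nat.sum_antidiagonal_succ']
      simp only [PowerSeries.coeff_zero_mul_X, extT_zero_right, zero_add]
      apply Finset.sum_congr rfl; intro p _
      rw [PowerSeries.coeff_succ_mul_X]

/-- the inner variable `t` as an element of `H[[s,t]]`. -/
def tS : HST := PowerSeries.C PowerSeries.X

lemma extST_mul_tS_right (F G : HST) : extST sh F (G * tS) = extST sh F G * tS := by
  refine PowerSeries.ext fun n => ?_
  rw [coeff_extST, tS, PowerSeries.coeff_mul_C, coeff_extST, Finset.sum_mul]
  apply Finset.sum_congr rfl; intro p _
  rw [PowerSeries.coeff_mul_C, extT_mul_X_right]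

end series

section series2
variable (sh : H →ₗ[ℚ] H →ₗ[ℚ] H)
variable (shOneL : ∀ u : H, sh 1 u = u)
  (shSymm : ∀ u u' : H, sh u u' = sh u' u)
  (shRec : ∀ (u u' : H) (i j : Fin 2),
    sh (u * FreeAlgebra.ι ℚ i) (u' * FreeAlgebra.ι ℚ j) =
      sh (u * FreeAlgebra.ι ℚ i) u' * FreeAlgebra.ι ℚ j
      + sh u (u' * FreeAlgebra.ι ℚ j) * FreeAlgebra.ι ℚ i)

include shRec in
lemma extT_rec (f g : HT) (i j : Fin 2) :
    extT sh (f * PowerSeries.C (FreeAlgebra.ι ℚ i)) (g * PowerSeries.C (FreeAlgebra.ι ℚ j)) =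
      extT sh (f * PowerSeries.C (FreeAlgebra.ι ℚ i)) g * PowerSeries.C (FreeAlgebra.ι ℚ j)
      + extT sh f (g * PowerSeries.C (FreeAlgebra.ι ℚ j)) * PowerSeries.C (FreeAlgebra.ι ℚ i)
    := by
  ext n
  simp only [map_add, coeff_extT, PowerSeries.coeff_mul_C, Finset.sum_mul]
  rw [← Finset.sum_add_distrib]
  apply Finset.sum_congr rfl; intro p _
  exact shRec _ _ i j

include shRec in
lemma extST_rec (F G : HST) (i j : Fin 2) :
    extST sh (F * embB (FreeAlgebra.ι ℚ i)) (G * embB (FreeAlgebra.ι ℚ j)) =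
      extST sh (F * embB (FreeAlgebra.ι ℚ i)) G * embB (FreeAlgebra.ι ℚ j)
      + extST sh F (G * embB (FreeAlgebra.ι ℚ j)) * embB (FreeAlgebra.ι ℚ i)
    := by
  refine PowerSeries.ext fun n => ?_
  simp only [map_add, coeff_extST, embB, PowerSeries.coeff_mul_C, Finset.sum_mul]
  rw [← Finset.sum_add_distrib]
  apply Finset.sum_congr rfl; intro p _
  exact extT_rec sh shRec _ _ i j

include shSymm in
lemma extST_mul_tS_left (F G : HST) : extST sh (F * tS) G = extST sh F G * tS := by
  rw [extST_comm sh shSymm, extST_mul_tS_right, extST_comm sh shSymm]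

include shSymm in
lemma extST_mul_X_left (F G : HST) :
    extST sh (F * PowerSeries.X) G = extST sh F G * PowerSeries.X := by
  rw [extST_comm sh shSymm, extST_mul_X_right, extST_comm sh shSymm]

-- centrality of the variables
lemma sS_comm (F : HST) : F * PowerSeries.X = PowerSeries.X * F :=
  (PowerSeries.commute_X F).eq

lemma tS_comm (F : HST) : F * tS = tS * F := by
  refine PowerSeries.ext fun n => ?_
  rw [tS, PowerSeries.coeff_mul_C, PowerSeries.coeff_C_mul]
  exact (PowerSeries.commute_X (PowerSeries.coeff n F)).eq

-- ring identities for the geometric series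
lemma A_mul_unit : invOnePlusE0T * (1 + embB e0 * tS) = 1 := by
  have h1 : (1 : HST) + embB e0 * tS
      = PowerSeries.C ((1 : HT) + PowerSeries.C e0 * PowerSeries.X) := by
    simp [embB, tS, map_add, map_mul]
  rw [invOnePlusE0T, h1, ← map_mul, ← map_one (PowerSeries.C (R := HT))]
  congr 1
  ext n
  rw [mul_add, mul_one, map_add, ← mul_assoc]
  cases n with
  | zero => simp
  | succ n =>
      simp only [PowerSeries.coeff_succ_mul_X, PowerSeries.coeff_mul_C, PowerSeries.coeff_mk,
        PowerSeries.coeff_one, Nat.succ_ne_zero, if_false, ← neg_pow]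
      rw [pow_succ, mul_neg, neg_add_cancel]

lemma unit_mul_A : (1 + embB e0 * tS) * invOnePlusE0T = 1 := by
  have h1 : (1 : HST) + embB e0 * tS
      = PowerSeries.C ((1 : HT) + PowerSeries.C e0 * PowerSeries.X) := by
    simp [embB, tS, map_add, map_mul]
  rw [invOnePlusE0T, h1, ← map_mul, ← map_one (PowerSeries.C (R := HT))]
  congr 1
  ext n
  rw [add_mul, one_mul, map_add, mul_assoc]
  cases n with
  | zero => simp
  | succ n =>
      simp only [PowerSeries.coeff_succ_X_mul, PowerSeries.coeff_C_mul, PowerSeries.coeff_mk,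
        PowerSeries.coeff_one, Nat.succ_ne_zero, if_false, ← neg_pow]
      rw [pow_succ', neg_mul, neg_add_cancel]

lemma Abar_eq : invOneMinusE0T = 1 + invOneMinusE0T * embB e0 * tS := by
  have h1 : invOneMinusE0T * embB e0 * tS
      = PowerSeries.C ((PowerSeries.mk fun n => (e0 : H) ^ n) * PowerSeries.C e0
          * PowerSeries.X) := by
    simp [invOneMinusE0T, embB, tS, map_mul]
  rw [h1, invOneMinusE0T, ← map_one (PowerSeries.C (R := HT)), ← map_add]
  congr 1
  ext n
  cases n with
  | zero => simp
  | succ n =>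
      simp only [map_add, PowerSeries.coeff_succ_mul_X, PowerSeries.coeff_mul_C,
        PowerSeries.coeff_mk, PowerSeries.coeff_one, Nat.succ_ne_zero, if_false, zero_add]
      rw [pow_succ]

lemma B_mul_unit : invOneMinusE0S * (1 - embB e0 * PowerSeries.X) = 1 := by
  refine PowerSeries.ext fun n => ?_
  rw [mul_sub, mul_one, map_sub, ← mul_assoc]
  cases n with
  | zero => simp [invOneMinusE0S, embB]
  | succ n =>
      simp only [invOneMinusE0S, embB, PowerSeries.coeff_succ_mul_X, PowerSeries.coeff_mul_C,
        PowerSeries.coeff_mk, PowerSeries.coeff_one, Nat.succ_ne_zero, if_false, ← map_mul,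
        ← pow_succ, sub_self]

lemma unit_mul_B : (1 - embB e0 * PowerSeries.X) * invOneMinusE0S = 1 := by
  refine PowerSeries.ext fun n => ?_
  rw [sub_mul, one_mul, map_sub, mul_assoc]
  cases n with
  | zero => simp [invOneMinusE0S, embB]
  | succ n =>
      simp only [invOneMinusE0S, embB, PowerSeries.coeff_succ_X_mul, PowerSeries.coeff_C_mul,
        PowerSeries.coeff_mk, PowerSeries.coeff_one, Nat.succ_ne_zero, if_false, ← map_mul,
        ← pow_succ', sub_self]

lemma Bbar_eq : invOnePlusE0S = 1 - invOnePlusE0S * embB e0 * PowerSeries.X := by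
  refine PowerSeries.ext fun n => ?_
  rw [map_sub]
  cases n with
  | zero => simp [invOnePlusE0S, embB]
  | succ n =>
      simp only [invOnePlusE0S, embB, ← neg_pow, PowerSeries.coeff_succ_mul_X,
        PowerSeries.coeff_mul_C, PowerSeries.coeff_mk, PowerSeries.coeff_one,
        Nat.succ_ne_zero, if_false, zero_sub, ← map_mul, ← map_neg]
      congr 1
      rw [pow_succ, mul_neg]

end series2

section series3
variable (sh : H →ₗ[ℚ] H →ₗ[ℚ] H)
variable (shOneL : ∀ u : H, sh 1 u = u)
  (shSymm : ∀ u u' : H, sh u u' = sh u' u)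
  (shRec : ∀ (u u' : H) (i j : Fin 2),
    sh (u * FreeAlgebra.ι ℚ i) (u' * FreeAlgebra.ι ℚ j) =
      sh (u * FreeAlgebra.ι ℚ i) u' * FreeAlgebra.ι ℚ j
      + sh u (u' * FreeAlgebra.ι ℚ j) * FreeAlgebra.ι ℚ i)

include shOneL shSymm shRec in
lemma lemA (Z : HST) (j : Fin 2) :
    extST sh invOnePlusE0T (Z * embB (FreeAlgebra.ι ℚ j)) =
      extST sh invOnePlusE0T Z * embB (FreeAlgebra.ι ℚ j) * invOnePlusE0T := by
  set A := invOnePlusE0T with hAdef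
  set Ej := embB (FreeAlgebra.ι ℚ j) with hEj
  set E0 := embB e0 with hE0
  have hA : A = 1 - (A * E0) * tS := by
    have h := A_mul_unit
    rw [mul_add, mul_one, ← mul_assoc] at h
    exact (eq_sub_of_add_eq h)
  have expand : ∀ Y : HST, extST sh A Y = Y - extST sh (A * E0) Y * tS := by
    intro Y
    conv_lhs => rw [hA]
    rw [extST_sub_left, extST_one_left sh shOneL, extST_mul_tS_left sh shSymm]
  have hrec : extST sh (A * E0) (Z * Ej) =
      extST sh (A * E0) Z * Ej + extST sh A (Z * Ej) * E0 := by
    have h := extST_rec sh shRec A Z 0 j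
    rw [hE0, hEj]
    exact h
  set W := extST sh A (Z * Ej) with hW
  have key : W = extST sh A Z * Ej - W * (E0 * tS) := by
    have step : extST sh (A * E0) Z * tS = Z - extST sh A Z := by
      rw [expand Z]; abel
    calc W = Z * Ej - extST sh (A * E0) (Z * Ej) * tS := expand _
    _ = Z * Ej - (extST sh (A * E0) Z * Ej + W * E0) * tS := by rw [hrec]
    _ = Z * Ej - ((extST sh (A * E0) Z * tS) * Ej + W * (E0 * tS)) := by
          rw [add_mul, mul_assoc (extST sh (A * E0) Z) Ej tS, tS_comm Ej,
            ← mul_assoc (extST sh (A * E0) Z) tS Ej, mul_assoc W E0 tS]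
    _ = Z * Ej - ((Z - extST sh A Z) * Ej + W * (E0 * tS)) := by rw [step]
    _ = extST sh A Z * Ej - W * (E0 * tS) := by rw [sub_mul]; abel
  have unit : W * (1 + E0 * tS) = extST sh A Z * Ej := by
    rw [mul_add, mul_one]
    exact eq_sub_iff_add_eq.mp key
  calc W = W * ((1 + E0 * tS) * A) := by rw [unit_mul_A, mul_one]
  _ = W * (1 + E0 * tS) * A := by rw [mul_assoc]
  _ = extST sh A Z * Ej * A := by rw [unit]

include shOneL shSymm shRec in
lemma lemB (Z : HST) (j : Fin 2) :
    extST sh invOneMinusE0S (Z * embB (FreeAlgebra.ι ℚ j)) =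
      extST sh invOneMinusE0S Z * embB (FreeAlgebra.ι ℚ j) * invOneMinusE0S := by
  set B := invOneMinusE0S with hBdef
  set Ej := embB (FreeAlgebra.ι ℚ j) with hEj
  set E0 := embB e0 with hE0
  have hB : B = 1 + (B * E0) * PowerSeries.X := by
    have h := B_mul_unit
    rw [mul_sub, mul_one, ← mul_assoc] at h
    exact sub_eq_iff_eq_add.mp h
  have expand : ∀ Y : HST, extST sh B Y = Y + extST sh (B * E0) Y * PowerSeries.X := by
    intro Y
    conv_lhs => rw [hB]
    rw [extST_add_left, extST_one_left sh shOneL, extST_mul_X_left sh shSymm]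
  have hrec : extST sh (B * E0) (Z * Ej) =
      extST sh (B * E0) Z * Ej + extST sh B (Z * Ej) * E0 := by
    have h := extST_rec sh shRec B Z 0 j
    rw [hE0, hEj]
    exact h
  set W := extST sh B (Z * Ej) with hW
  have key : W = extST sh B Z * Ej + W * (E0 * PowerSeries.X) := by
    have step : extST sh (B * E0) Z * PowerSeries.X = extST sh B Z - Z := by
      rw [expand Z]; abel
    calc W = Z * Ej + extST sh (B * E0) (Z * Ej) * PowerSeries.X := expand _
    _ = Z * Ej + (extST sh (B * E0) Z * Ej + W * E0) * PowerSeries.X := by rw [hrec]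
    _ = Z * Ej + ((extST sh (B * E0) Z * PowerSeries.X) * Ej + W * (E0 * PowerSeries.X)) := by
          rw [add_mul, mul_assoc (extST sh (B * E0) Z) Ej PowerSeries.X, sS_comm Ej,
            ← mul_assoc (extST sh (B * E0) Z) PowerSeries.X Ej, mul_assoc W E0 PowerSeries.X]
    _ = Z * Ej + ((extST sh B Z - Z) * Ej + W * (E0 * PowerSeries.X)) := by rw [step]
    _ = extST sh B Z * Ej + W * (E0 * PowerSeries.X) := by rw [sub_mul]; abel
  have unit : W * (1 - E0 * PowerSeries.X) = extST sh B Z * Ej := by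
    rw [mul_sub, mul_one]
    exact sub_eq_of_eq_add key
  calc W = W * ((1 - E0 * PowerSeries.X) * B) := by rw [unit_mul_B, mul_one]
  _ = W * (1 - E0 * PowerSeries.X) * B := by rw [mul_assoc]
  _ = extST sh B Z * Ej * B := by rw [unit]

include shOneL shSymm shRec in
lemma lemAbar (Z : HST) :
    extST sh invOnePlusE0T (Z * invOneMinusE0T) =
      extST sh invOnePlusE0T Z * (1 + embB e0 * tS) := by
  have hZ : Z * invOneMinusE0T
      = Z + ((Z * invOneMinusE0T) * embB e0) * tS := by
    conv_lhs => rw [Abar_eq]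
    noncomm_ring
  have hA2 : invOnePlusE0T = 1 - (embB e0 * invOnePlusE0T) * tS := by
    have h := unit_mul_A
    rw [add_mul, one_mul, mul_assoc, ← tS_comm invOnePlusE0T, ← mul_assoc] at h
    exact eq_sub_of_add_eq h
  have key : extST sh invOnePlusE0T (Z * invOneMinusE0T)
      = extST sh invOnePlusE0T Z
        + ((extST sh invOnePlusE0T (Z * invOneMinusE0T) * embB e0) * invOnePlusE0T) * tS := by
    conv_lhs => rw [hZ]
    rw [extST_add_right, extST_mul_tS_right]
    congr 1
    rw [show (embB e0 : HST) = embB (FreeAlgebra.ι ℚ 0) from rfl,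
      lemA sh shOneL shSymm shRec (Z * invOneMinusE0T) 0]
  have key2 : extST sh invOnePlusE0T (Z * invOneMinusE0T) * invOnePlusE0T
      = extST sh invOnePlusE0T Z := by
    calc extST sh invOnePlusE0T (Z * invOneMinusE0T) * invOnePlusE0T
        = extST sh invOnePlusE0T (Z * invOneMinusE0T)
          * (1 - (embB e0 * invOnePlusE0T) * tS) := by rw [← hA2]
    _ = extST sh invOnePlusE0T (Z * invOneMinusE0T)
        - ((extST sh invOnePlusE0T (Z * invOneMinusE0T) * embB e0) * invOnePlusE0T) * tS := by
          noncomm_ring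
    _ = extST sh invOnePlusE0T Z := sub_eq_of_eq_add key
  calc extST sh invOnePlusE0T (Z * invOneMinusE0T)
      = extST sh invOnePlusE0T (Z * invOneMinusE0T) * (invOnePlusE0T * (1 + embB e0 * tS)) := by
        rw [A_mul_unit, mul_one]
  _ = (extST sh invOnePlusE0T (Z * invOneMinusE0T) * invOnePlusE0T) * (1 + embB e0 * tS) := by
        rw [mul_assoc]
  _ = extST sh invOnePlusE0T Z * (1 + embB e0 * tS) := by rw [key2]

include shOneL shSymm shRec in
lemma lemBbar (Z : HST) :
    extST sh invOneMinusE0S (Z * invOnePlusE0S) =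
      extST sh invOneMinusE0S Z * (1 - embB e0 * PowerSeries.X) := by
  have hZ : Z * invOnePlusE0S
      = Z - ((Z * invOnePlusE0S) * embB e0) * PowerSeries.X := by
    conv_lhs => rw [Bbar_eq]
    noncomm_ring
  have hB2 : invOneMinusE0S = 1 + (embB e0 * invOneMinusE0S) * PowerSeries.X := by
    have h := unit_mul_B
    rw [sub_mul, one_mul, mul_assoc, ← sS_comm invOneMinusE0S, ← mul_assoc] at h
    exact sub_eq_iff_eq_add.mp h
  have key : extST sh invOneMinusE0S (Z * invOnePlusE0S)
      = extST sh invOneMinusE0S Z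
        - ((extST sh invOneMinusE0S (Z * invOnePlusE0S) * embB e0) * invOneMinusE0S)
          * PowerSeries.X := by
    conv_lhs => rw [hZ]
    rw [extST_sub_right, extST_mul_X_right]
    congr 1
    rw [show (embB e0 : HST) = embB (FreeAlgebra.ι ℚ 0) from rfl,
      lemB sh shOneL shSymm shRec (Z * invOnePlusE0S) 0]
  have key2 : extST sh invOneMinusE0S (Z * invOnePlusE0S) * invOneMinusE0S
      = extST sh invOneMinusE0S Z := by
    calc extST sh invOneMinusE0S (Z * invOnePlusE0S) * invOneMinusE0S
        = extST sh invOneMinusE0S (Z * invOnePlusE0S)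
          * (1 + (embB e0 * invOneMinusE0S) * PowerSeries.X) := by rw [← hB2]
    _ = extST sh invOneMinusE0S (Z * invOnePlusE0S)
        + ((extST sh invOneMinusE0S (Z * invOnePlusE0S) * embB e0) * invOneMinusE0S)
          * PowerSeries.X := by noncomm_ring
    _ = extST sh invOneMinusE0S Z := eq_sub_iff_add_eq.mp key
  calc extST sh invOneMinusE0S (Z * invOnePlusE0S)
      = extST sh invOneMinusE0S (Z * invOnePlusE0S)
        * (invOneMinusE0S * (1 - embB e0 * PowerSeries.X)) := by rw [B_mul_unit, mul_one]
  _ = (extST sh invOneMinusE0S (Z * invOnePlusE0S) * invOneMinusE0S)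
      * (1 - embB e0 * PowerSeries.X) := by rw [mul_assoc]
  _ = extST sh invOneMinusE0S Z * (1 - embB e0 * PowerSeries.X) := by rw [key2]

end series3

lemma telescope {R : Type*} [Ring R] (f g : ℕ → R) (n : ℕ)
    (h : ∀ v ≤ n, g v = f v + f (v + 1)) :
    ∑ v ∈ Finset.range (n + 1), (-1 : R) ^ v * g v = f 0 + (-1 : R) ^ n * f (n + 1) := by
  induction n with
  | zero => simpa using h 0 le_rfl
  | succ n ih =>
      rw [Finset.sum_range_succ, ih fun v hv => h v (hv.trans (Nat.le_succ n)),
        h (n + 1) le_rfl, pow_succ]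
      generalize ((-1 : R) ^ n) = c
      noncomm_ring

theorem stmt_6
    (sh : H →ₗ[ℚ] H →ₗ[ℚ] H)
    (hOneL : ∀ l : List (Fin 2), sh (word []) (word l) = word l)
    (hOneR : ∀ l : List (Fin 2), sh (word l) (word []) = word l)
    (hRec : ∀ (l l' : List (Fin 2)) (i j : Fin 2),
      sh (word (l ++ [i])) (word (l' ++ [j])) =
        sh (word (l ++ [i])) (word l') * FreeAlgebra.ι ℚ j
        + sh (word l) (word (l' ++ [j])) * FreeAlgebra.ι ℚ i) :
    ∀ l : List (Fin 2),
      ∑ v ∈ Finset.range (l.length + 1),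
        (-1 : HST) ^ v
          * extST sh (invOnePlusE0T * embB e1 * embB (word (l.take v)))
              (invOneMinusE0S * embB e1 * embB (word ((l.drop v).reverse)))
      = extST sh invOnePlusE0T
          (invOneMinusE0S * embB e1 * embB (word l.reverse) * embB e1 * invOneMinusE0T)
        + (-1 : HST) ^ l.length
          * extST sh invOneMinusE0S
              (invOnePlusE0T * embB e1 * embB (word l) * embB e1 * invOnePlusE0S) := by
  have shOneL' := sh_one_left sh hOneL
  have shOneR' := sh_one_right sh hOneR
  have shSymm := sh_symm sh hOneL hOneR hRec
  have shRec' := sh_rec sh hRec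
  intro l
  set l' : List (Fin 2) := 1 :: l with hl'
  set Ψ : ℕ → HST := fun v =>
    if v = l.length + 1 then
      extST sh invOneMinusE0S (invOnePlusE0T * embB e1 * embB (word l)) * embB e1
    else
      extST sh (invOnePlusE0T * embB (word (l'.take v)))
          (invOneMinusE0S * embB e1 * embB (word ((l.drop v).reverse)))
        * embB (FreeAlgebra.ι ℚ (l'.getD v 1)) with hΨ
  have hlen : l'.length = l.length + 1 := by rw [hl']; rfl
  have htake : ∀ v ≤ l.length,
      invOnePlusE0T * embB (word (l'.take v)) * embB (FreeAlgebra.ι ℚ (l'.getD v 1))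
        = invOnePlusE0T * embB (word (l'.take (v + 1))) := by
    intro v hv
    have hvlt : v < l'.length := by omega
    have h2 : l'.take (v + 1) = l'.take v ++ [l'.getD v 1] := by
      rw [List.take_succ, List.getElem?_eq_getElem hvlt, List.getD_eq_getElem l' 1 hvlt]
      rfl
    rw [h2, word_concat, embB_mul, ← mul_assoc]
  have hfirst : ∀ v : ℕ,
      invOnePlusE0T * embB e1 * embB (word (l.take v))
        = invOnePlusE0T * embB (word (l'.take (v + 1))) := by
    intro v
    have h3 : l'.take (v + 1) = 1 :: l.take v := by rw [hl']; rfl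
    rw [h3, word_cons, embB_mul, ← mul_assoc]
    rfl
  have hsecond : ∀ v : ℕ, v < l.length →
      invOneMinusE0S * embB e1 * embB (word ((l.drop v).reverse))
        = invOneMinusE0S * embB e1 * embB (word ((l.drop (v + 1)).reverse))
          * embB (FreeAlgebra.ι ℚ (l'.getD (v + 1) 1)) := by
    intro v hvl
    have hd : l.drop v = l.getD v 1 :: l.drop (v + 1) := by
      rw [List.drop_eq_getElem_cons hvl, List.getD_eq_getElem l 1 hvl]
    have hgd : l'.getD (v + 1) 1 = l.getD v 1 := by rw [hl']; simp [List.getD]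
    rw [hgd, hd, List.reverse_cons, word_concat, embB_mul, ← mul_assoc]
  have hstep : ∀ v ≤ l.length,
      extST sh (invOnePlusE0T * embB e1 * embB (word (l.take v)))
        (invOneMinusE0S * embB e1 * embB (word ((l.drop v).reverse)))
      = Ψ v + Ψ (v + 1) := by
    intro v hv
    rcases Nat.lt_or_ge v l.length with hvN | hge
    · have hΨv : Ψ v = extST sh (invOnePlusE0T * embB (word (l'.take v)))
          (invOneMinusE0S * embB e1 * embB (word ((l.drop v).reverse)))
          * embB (FreeAlgebra.ι ℚ (l'.getD v 1)) := by
        simp only [hΨ]; rw [if_neg (by omega)]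
      have hΨv1 : Ψ (v + 1) = extST sh (invOnePlusE0T * embB (word (l'.take (v + 1))))
          (invOneMinusE0S * embB e1 * embB (word ((l.drop (v + 1)).reverse)))
          * embB (FreeAlgebra.ι ℚ (l'.getD (v + 1) 1)) := by
        simp only [hΨ]; rw [if_neg (by omega)]
      rw [hfirst v, ← htake v hv, hsecond v hvN, extST_rec sh shRec', hΨv, hΨv1,
        htake v hv, ← hsecond v hvN, add_comm]
    · have hvN : v = l.length := le_antisymm hv hge
      have hΨv : Ψ v = extST sh (invOnePlusE0T * embB (word (l'.take v)))
          (invOneMinusE0S * embB e1 * embB (word ((l.drop v).reverse)))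
          * embB (FreeAlgebra.ι ℚ (l'.getD v 1)) := by
        simp only [hΨ]; rw [if_neg (by omega)]
      have hΨv1 : Ψ (v + 1) = extST sh invOneMinusE0S
          (invOnePlusE0T * embB e1 * embB (word l)) * embB e1 := by
        simp only [hΨ]; rw [if_pos (by omega : v + 1 = l.length + 1)]
      have hdrop : (l.drop v).reverse = ([] : List (Fin 2)) := by
        rw [List.drop_eq_nil_of_le (by omega)]; rfl
      have hBe1 : invOneMinusE0S * embB e1 * embB (word ((l.drop v).reverse))
          = invOneMinusE0S * embB (FreeAlgebra.ι ℚ 1) := by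
        rw [hdrop, word_nil, embB_one, mul_one]; rfl
      have htakefull : l'.take (v + 1) = l' := List.take_of_length_le (by omega)
      have hfull : invOnePlusE0T * embB (word (l'.take (v + 1)))
          = invOnePlusE0T * embB e1 * embB (word l) := by
        rw [htakefull, hl', word_cons, embB_mul, ← mul_assoc]; rfl
      rw [hBe1, hfirst v, ← htake v hv, extST_rec sh shRec', htake v hv, hfull,
        hΨv, hΨv1, hBe1,
        extST_comm sh shSymm (invOnePlusE0T * embB e1 * embB (word l)) invOneMinusE0S,
        add_comm]
      rfl
  rw [telescope Ψ (fun v =>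
      extST sh (invOnePlusE0T * embB e1 * embB (word (l.take v)))
        (invOneMinusE0S * embB e1 * embB (word ((l.drop v).reverse)))) l.length hstep]
  have hΨ0 : Ψ 0 = extST sh invOnePlusE0T
      (invOneMinusE0S * embB e1 * embB (word l.reverse) * embB e1 * invOneMinusE0T) := by
    have h1 : Ψ 0 = extST sh invOnePlusE0T
        (invOneMinusE0S * embB e1 * embB (word l.reverse)) * embB e1 := by
      simp only [hΨ]; rw [if_neg (by omega)]
      have : l'.getD 0 1 = 1 := by simp [hl', List.getD]
      rw [this]
      simp only [List.take_zero, word_nil, embB_one, mul_one, List.drop_zero]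
      rfl
    rw [h1]
    rw [show invOneMinusE0S * embB e1 * embB (word l.reverse) * embB e1 * invOneMinusE0T
        = (invOneMinusE0S * embB e1 * embB (word l.reverse) * embB (FreeAlgebra.ι ℚ 1))
          * invOneMinusE0T from rfl]
    rw [lemAbar sh shOneL' shSymm shRec',
      lemA sh shOneL' shSymm shRec' (invOneMinusE0S * embB e1 * embB (word l.reverse)) 1,
      mul_assoc (extST sh invOnePlusE0T (invOneMinusE0S * embB e1 * embB (word l.reverse))
        * embB (FreeAlgebra.ι ℚ 1)) invOnePlusE0T (1 + embB e0 * tS),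
      A_mul_unit, mul_one]
    rfl
  have hΨN1 : Ψ (l.length + 1) = extST sh invOneMinusE0S
      (invOnePlusE0T * embB e1 * embB (word l) * embB e1 * invOnePlusE0S) := by
    have h1 : Ψ (l.length + 1) = extST sh invOneMinusE0S
        (invOnePlusE0T * embB e1 * embB (word l)) * embB e1 := by
      simp only [hΨ]; simp
    rw [h1]
    rw [show invOnePlusE0T * embB e1 * embB (word l) * embB e1 * invOnePlusE0S
        = (invOnePlusE0T * embB e1 * embB (word l) * embB (FreeAlgebra.ι ℚ 1))
          * invOnePlusE0S from rfl]
    rw [lemBbar sh shOneL' shSymm shRec',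
      lemB sh shOneL' shSymm shRec' (invOnePlusE0T * embB e1 * embB (word l)) 1,
      mul_assoc (extST sh invOneMinusE0S (invOnePlusE0T * embB e1 * embB (word l))
        * embB (FreeAlgebra.ι ℚ 1)) invOneMinusE0S (1 - embB e0 * PowerSeries.X),
      B_mul_unit, mul_one]
    rfl
  rw [hΨ0, hΨN1]
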